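/- There exists p₀ > 0 such that for every p ∈ (0, p₀] and every μ ∈ ℝ, the function y ↦ E(y,p,μ) on ℝ has a unique global maximum point ȳ ∈ ℝ, and moreover ∂²E/∂y²(ȳ,p,μ) < 0. (In other words, the strip {(p,μ) : 0 < p ≤ p₀, μ ∈ ℝ} consists entirely of single-phase points.) -/

import Mathlib

/-- The single-cell partition function `K(y,p,μ)` with cell volume `υ` and ratio `a`. -/
noncomputable def K (υ a y p μ : ℝ) : ℝ :=
  ∑' n : ℕ, (υ ^ n / (Nat.factorial n : ℝ)) *
    Real.exp ((y + μ) * n - (a * p / 2) * (n : ℝ) ^ 2)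

/-- The function `E(y,p,μ) = -y²/(2p) + ln K(y,p,μ)`. -/
noncomputable def E (υ a y p μ : ℝ) : ℝ :=
  -(y ^ 2) / (2 * p) + Real.log (K υ a y p μ)

open Real Filter Topology

lemma abs_le_eps_sq (ε x : ℝ) (hε : 0 < ε) : |x| ≤ ε * x^2 + 1/(4*ε) := by
  have h4 : 1/(4*ε) * (4*ε) = 1 := by field_simp
  rcases abs_cases x with ⟨h, _⟩ | ⟨h, _⟩ <;> rw [h] <;>
    nlinarith [sq_nonneg (2*ε*x - 1), sq_nonneg (2*ε*x + 1), h4, hε]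

lemma var_bound (β ε : ℝ) (hβ : 0 < β) (hε : 0 < ε) (hε3 : 3*ε < 1)
    (w : ℕ → ℝ) (hw : ∀ n, 0 < w n)
    (hsum : Summable w) (hsum2 : Summable (fun n : ℕ => (n:ℝ)^2 * w n))
    (hrat : ∀ n, w (n+2) * w n * Real.exp β ≤ w (n+1) * w (n+1))
    (hmode : ∃ n, w (n+1) ≤ w n) :
    ∃ c : ℝ, ∑' n : ℕ, ((n:ℝ) - c)^2 * w n ≤ ((1/β + 1 + 3/(4*ε))/(1-3*ε)) * ∑' n : ℕ, w n := by
  classical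
  set k₀ := Nat.find hmode with hk₀
  set c : ℝ := (k₀ : ℝ) + 1 with hc
  refine ⟨c, ?_⟩
  -- summability facts
  have hsum1 : Summable (fun n : ℕ => (n:ℝ) * w n) := by
    refine Summable.of_nonneg_of_le (fun n => mul_nonneg (Nat.cast_nonneg n) (hw n).le)
      (fun n => ?_) ((hsum2.add hsum).div_const 2)
    nlinarith [sq_nonneg ((n:ℝ) - 1), (hw n).le]
  have hsumQ : Summable (fun n : ℕ => ((n:ℝ) - c)^2 * w n) := by
    have : (fun n : ℕ => ((n:ℝ) - c)^2 * w n)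
        = fun n : ℕ => ((n:ℝ)^2 * w n) - (2*c) * ((n:ℝ) * w n) + c^2 * w n := by
      funext n; ring
    rw [this]
    exact (hsum2.sub ((hsum1.mul_left (2*c)))).add (hsum.mul_left (c^2))
  have hsumR : Summable (fun n : ℕ => |(n:ℝ) - c| * w n) := by
    refine Summable.of_nonneg_of_le (fun n => mul_nonneg (abs_nonneg _) (hw n).le)
      (fun n => ?_) ((hsumQ.add hsum).div_const 2)
    have h := mul_le_mul_of_nonneg_right
      (abs_le_eps_sq (1/2) ((n:ℝ) - c) (by norm_num)) (hw n).le
    nlinarith [h]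
  -- ratio facts
  have hfind : w (k₀ + 1) ≤ w k₀ := Nat.find_spec hmode
  have hmin : ∀ m, m < k₀ → w m < w (m + 1) := fun m hm =>
    lt_of_not_ge (Nat.find_min hmode hm)
  have R1 : ∀ d : ℕ, w (k₀ + d + 1) * Real.exp (β * (d:ℝ)) ≤ w (k₀ + d) := by
    intro d
    induction d with
    | zero => simpa using hfind
    | succ d ih =>
      have h1 := hrat (k₀ + d)
      have hexp : Real.exp (β * ((d:ℝ)+1)) = Real.exp β * Real.exp (β * (d:ℝ)) := by
        rw [← Real.exp_add]; ring_nf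
      have key : w (k₀ + d + 2) * Real.exp (β * ((d:ℝ)+1)) * w (k₀ + d)
          ≤ w (k₀ + d + 1) * w (k₀ + d) := by
        calc w (k₀ + d + 2) * Real.exp (β * ((d:ℝ)+1)) * w (k₀ + d)
            = (w (k₀ + d + 2) * w (k₀ + d) * Real.exp β) * Real.exp (β * (d:ℝ)) := by
              rw [hexp]; ring
          _ ≤ (w (k₀ + d + 1) * w (k₀ + d + 1)) * Real.exp (β * (d:ℝ)) :=
              mul_le_mul_of_nonneg_right h1 (Real.exp_nonneg _)
          _ = w (k₀ + d + 1) * (w (k₀ + d + 1) * Real.exp (β * (d:ℝ))) := by ring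
          _ ≤ w (k₀ + d + 1) * w (k₀ + d) :=
              mul_le_mul_of_nonneg_left ih (hw (k₀ + d + 1)).le
      have h2 := le_of_mul_le_mul_right key (hw (k₀ + d))
      have hidx1 : k₀ + (d + 1) + 1 = k₀ + d + 2 := by omega
      have hidx2 : k₀ + (d + 1) = k₀ + d + 1 := by omega
      rw [hidx1, hidx2]
      push_cast
      exact h2
  have R1' : ∀ i : ℕ, β * (i:ℝ) * w (k₀ + i + 1) ≤ w (k₀ + i) - w (k₀ + i + 1) := by
    intro i
    have h1 := R1 i
    have h2 := mul_le_mul_of_nonneg_left (Real.add_one_le_exp (β * (i:ℝ))) (hw (k₀ + i + 1)).le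
    nlinarith [hw (k₀ + i + 1)]
  have R2 : ∀ j m : ℕ, m + 1 + j ≤ k₀ → w m * Real.exp (β * (j:ℝ)) ≤ w (m+1) := by
    intro j
    induction j with
    | zero => intro m hm; simpa using (hmin m (by omega)).le
    | succ j ih =>
      intro m hm
      have h1 := hrat m
      have ih' := ih (m+1) (by omega)
      have hexp : Real.exp (β * ((j:ℝ)+1)) = Real.exp β * Real.exp (β * (j:ℝ)) := by
        rw [← Real.exp_add]; ring_nf
      have key : w m * Real.exp (β * ((j:ℝ)+1)) * w (m+2) ≤ w (m+1) * w (m+2) := by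
        calc w m * Real.exp (β * ((j:ℝ)+1)) * w (m+2)
            = (w (m+2) * w m * Real.exp β) * Real.exp (β * (j:ℝ)) := by rw [hexp]; ring
          _ ≤ (w (m+1) * w (m+1)) * Real.exp (β * (j:ℝ)) :=
              mul_le_mul_of_nonneg_right h1 (Real.exp_nonneg _)
          _ = w (m+1) * (w (m+1) * Real.exp (β * (j:ℝ))) := by ring
          _ ≤ w (m+1) * w (m+2) := mul_le_mul_of_nonneg_left ih' (hw (m+1)).le
      have h2 := le_of_mul_le_mul_right key (hw (m+2))
      push_cast
      exact h2
  have R2' : ∀ m j : ℕ, m + 1 + j = k₀ → β * (j:ℝ) * w m ≤ w (m+1) - w m := by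
    intro m j hmj
    have h1 := R2 j m hmj.le
    have h2 := mul_le_mul_of_nonneg_left (Real.add_one_le_exp (β * (j:ℝ))) (hw m).le
    nlinarith [hw m]
  set g : ℕ → ℝ := fun m => ((m:ℝ) + 1 - c) * (w m - w (m+1)) with hg
  set Ψ : ℕ → ℝ := fun j => (((j:ℝ) - c)^2 - 3*|(j:ℝ) - c| - 1) * w j with hΨ
  have hts : ∀ N : ℕ, ∑ m ∈ Finset.range N, g m
      = (1 - c) * w 0 - ((N:ℝ) + 1 - c) * w N + ∑ m ∈ Finset.range N, w (m+1) := by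
    intro N
    induction N with
    | zero => simp [hg, hc]
    | succ N ih =>
      rw [Finset.sum_range_succ, ih, Finset.sum_range_succ]
      simp only [hg]
      push_cast
      ring
  have hsum' : Summable (fun m : ℕ => w (m+1)) := (summable_nat_add_iff 1).2 hsum
  have hws : ∀ N : ℕ, ∑ m ∈ Finset.range N, w (m+1) ≤ ∑' n : ℕ, w n := by
    intro N
    have h1 : ∑ m ∈ Finset.range N, w (m+1) ≤ ∑' m : ℕ, w (m+1) :=
      Summable.sum_le_tsum _ (fun i _ => (hw _).le) hsum'
    have h2 : ∑' n : ℕ, w n = w 0 + ∑' m : ℕ, w (m+1) := Summable.tsum_eq_zero_add hsum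
    linarith [hw 0]
  have hSle : ∀ N : ℕ, k₀ ≤ N → ∑ m ∈ Finset.range N, g m ≤ ∑' n : ℕ, w n := by
    intro N hN
    rw [hts N]
    have hc1 : (1:ℝ) - c ≤ 0 := by
      rw [hc]
      have : (0:ℝ) ≤ (k₀:ℝ) := Nat.cast_nonneg k₀
      linarith
    have h1 : (1 - c) * w 0 ≤ 0 := mul_nonpos_of_nonpos_of_nonneg hc1 (hw 0).le
    have h2 : 0 ≤ ((N:ℝ) + 1 - c) * w N := by
      apply mul_nonneg _ (hw N).le
      rw [hc]
      have : (k₀:ℝ) ≤ (N:ℝ) := Nat.cast_le.mpr hN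
      linarith
    linarith [hws N]
  -- per-term estimates
  have hgl : ∀ m, m < k₀ → β * Ψ m ≤ g m := by
    intro m hm
    obtain ⟨j, hj⟩ : ∃ j, m + 1 + j = k₀ := ⟨k₀ - m - 1, by omega⟩
    have h1 := R2' m j hj
    have hjr : (j:ℝ) = (k₀:ℝ) - (m:ℝ) - 1 := by
      have h := congrArg (Nat.cast : ℕ → ℝ) hj
      push_cast at h; linarith
    have hmk : (m:ℝ) + 1 ≤ (k₀:ℝ) := by exact_mod_cast hm
    have habs : |(m:ℝ) - c| = c - (m:ℝ) := by
      rw [abs_of_nonpos (by rw [hc]; linarith)]; ring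
    simp only [hΨ, hg, habs]
    rw [hjr] at h1
    have hcm : (0:ℝ) ≤ c - (m:ℝ) - 1 := by rw [hc]; linarith
    have h2 := mul_le_mul_of_nonneg_left h1 hcm
    have h3 : (0:ℝ) ≤ β * w m := (mul_pos hβ (hw m)).le
    rw [hc] at *
    nlinarith [h2, h3]
  have hΨk0 : β * Ψ k₀ ≤ 0 := by
    have h1 : (k₀:ℝ) - c = -1 := by rw [hc]; ring
    have h2 : Ψ k₀ = -3 * w k₀ := by
      simp only [hΨ, h1]
      norm_num
    rw [h2]
    nlinarith [hw k₀, hβ]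
  have hgr : ∀ i : ℕ, β * Ψ (k₀+1+i) ≤ g (k₀+i) := by
    intro i
    have h1 := R1' i
    have hΨval : Ψ (k₀+1+i) = ((i:ℝ)^2 - 3*(i:ℝ) - 1) * w (k₀+1+i) := by
      simp only [hΨ]
      have hd : ((k₀+1+i : ℕ):ℝ) - c = (i:ℝ) := by rw [hc]; push_cast; ring
      rw [hd, abs_of_nonneg (Nat.cast_nonneg i)]
    have hgval : g (k₀+i) = (i:ℝ) * (w (k₀+i) - w (k₀+i+1)) := by
      simp only [hg]
      have hd : ((k₀+i : ℕ):ℝ) + 1 - c = (i:ℝ) := by rw [hc]; push_cast; ring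
      rw [hd]
    have hidx : k₀ + 1 + i = k₀ + i + 1 := by omega
    rw [hΨval, hgval, hidx]
    have h2 := mul_le_mul_of_nonneg_left h1 (Nat.cast_nonneg i : (0:ℝ) ≤ (i:ℝ))
    have h3 : (0:ℝ) ≤ β * w (k₀ + i + 1) := (mul_pos hβ (hw _)).le
    nlinarith [h2, h3]
  -- the key bound for partial sums
  have hmain : ∀ M : ℕ, β * ∑ j ∈ Finset.range (k₀+1+M), Ψ j ≤ ∑' n : ℕ, w n := by
    intro M
    have e1 : ∑ j ∈ Finset.range (k₀+1+M), Ψ j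
        = (∑ j ∈ Finset.range k₀, Ψ j) + Ψ k₀ + ∑ i ∈ Finset.range M, Ψ (k₀+1+i) := by
      rw [Finset.sum_range_add, Finset.sum_range_succ]
    have e2 : ∑ m ∈ Finset.range (k₀+M), g m
        = (∑ m ∈ Finset.range k₀, g m) + ∑ i ∈ Finset.range M, g (k₀+i) :=
      Finset.sum_range_add g k₀ M
    have hterm1 : β * ∑ j ∈ Finset.range k₀, Ψ j ≤ ∑ m ∈ Finset.range k₀, g m := by
      rw [Finset.mul_sum]
      exact Finset.sum_le_sum (fun m hm => hgl m (Finset.mem_range.1 hm))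
    have hterm2 : β * ∑ i ∈ Finset.range M, Ψ (k₀+1+i) ≤ ∑ i ∈ Finset.range M, g (k₀+i) := by
      rw [Finset.mul_sum]
      exact Finset.sum_le_sum (fun i _ => hgr i)
    have hS := hSle (k₀+M) (by omega)
    rw [e2] at hS
    rw [e1, mul_add, mul_add]
    linarith [hΨk0, hterm1, hterm2]
  have hsumΨ : Summable Ψ := by
    have e : Ψ = fun j : ℕ => (((j:ℝ) - c)^2 * w j) - ((3 * (|(j:ℝ) - c| * w j)) + w j) := by
      funext j; simp only [hΨ]; ring
    rw [e]
    exact hsumQ.sub ((hsumR.mul_left 3).add hsum)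
  have hlim : Tendsto (fun M : ℕ => β * ∑ j ∈ Finset.range (k₀+1+M), Ψ j) atTop
      (𝓝 (β * ∑' j, Ψ j)) := by
    have h1 := hsumΨ.hasSum.tendsto_sum_nat
    have h2 : Tendsto (fun M : ℕ => k₀+1+M) atTop atTop :=
      tendsto_atTop_mono (fun M => Nat.le_add_left M (k₀+1)) tendsto_id
    exact (h1.comp h2).const_mul β
  have hΨle : β * ∑' j, Ψ j ≤ ∑' n : ℕ, w n :=
    le_of_tendsto hlim (Filter.Eventually.of_forall hmain)
  have hΨeq : ∑' j, Ψ j = (∑' n : ℕ, ((n:ℝ) - c)^2 * w n)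
      - (3 * (∑' n : ℕ, |(n:ℝ) - c| * w n) + ∑' n : ℕ, w n) := by
    have e : Ψ = fun j : ℕ => (((j:ℝ) - c)^2 * w j) - ((3 * (|(j:ℝ) - c| * w j)) + w j) := by
      funext j; simp only [hΨ]; ring
    rw [e, Summable.tsum_sub hsumQ ((hsumR.mul_left 3).add hsum),
        Summable.tsum_add (hsumR.mul_left 3) hsum, tsum_mul_left]
  have hRle : ∑' n : ℕ, |(n:ℝ) - c| * w n
      ≤ ε * (∑' n : ℕ, ((n:ℝ) - c)^2 * w n) + (1/(4*ε)) * ∑' n : ℕ, w n := by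
    have h1 : ∀ n : ℕ, |(n:ℝ) - c| * w n
        ≤ ε * (((n:ℝ) - c)^2 * w n) + (1/(4*ε)) * w n := by
      intro n
      have h := mul_le_mul_of_nonneg_right (abs_le_eps_sq ε ((n:ℝ) - c) hε) (hw n).le
      nlinarith [h]
    have h2 := Summable.tsum_le_tsum h1 hsumR ((hsumQ.mul_left ε).add (hsum.mul_left (1/(4*ε))))
    rwa [Summable.tsum_add (hsumQ.mul_left ε) (hsum.mul_left (1/(4*ε))), tsum_mul_left,
      tsum_mul_left] at h2
  have hK0 : (0:ℝ) ≤ ∑' n : ℕ, w n := tsum_nonneg (fun n => (hw n).le)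
  have hQ0 : (0:ℝ) ≤ ∑' n : ℕ, ((n:ℝ) - c)^2 * w n :=
    tsum_nonneg (fun n => mul_nonneg (sq_nonneg _) (hw n).le)
  have h13 : (0:ℝ) < 1 - 3*ε := by linarith
  rw [hΨeq] at hΨle
  rw [div_mul_eq_mul_div, le_div_iff₀ h13]
  have hβinv : β * (1/β) = 1 := by field_simp
  have hβR := mul_le_mul_of_nonneg_left hRle (by positivity : (0:ℝ) ≤ 3*β)
  have key : β * ((∑' n : ℕ, ((n:ℝ) - c)^2 * w n) * (1-3*ε))
      ≤ β * ((1/β + 1 + 3/(4*ε)) * ∑' n : ℕ, w n) := by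
    have expand : β * ((1/β + 1 + 3/(4*ε)) * ∑' n : ℕ, w n)
        = (β * (1/β)) * (∑' n : ℕ, w n) + β * (∑' n : ℕ, w n)
          + (3*β) * ((1/(4*ε)) * ∑' n : ℕ, w n) := by ring
    rw [expand, hβinv, one_mul]
    nlinarith [hΨle, hβR]
  exact le_of_mul_le_mul_left key hβ

noncomputable def W (υ a p μ : ℝ) (n : ℕ) (y : ℝ) : ℝ :=
  υ ^ n / (Nat.factorial n : ℝ) * Real.exp ((y + μ) * n - (a * p / 2) * (n : ℝ) ^ 2)

noncomputable def M (υ a p μ : ℝ) (k : ℕ) (y : ℝ) : ℝ :=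
  ∑' n : ℕ, (n : ℝ) ^ k * W υ a p μ n y

section Wlemmas

variable {υ a p μ : ℝ} (hυ : 0 < υ) (ha : 1 < a) (hp : 0 < p)

include hυ in
lemma W_pos (n : ℕ) (y : ℝ) : 0 < W υ a p μ n y := by
  unfold W
  have h1 : (0:ℝ) < (Nat.factorial n : ℝ) := by exact_mod_cast Nat.factorial_pos n
  exact mul_pos (div_pos (pow_pos hυ n) h1) (Real.exp_pos _)

include hυ ha hp in
lemma W_decay (n : ℕ) (y : ℝ) :
    W υ a p μ n y ≤ Real.exp υ * Real.exp ((|y + μ| + 1)^2 / (2 * (a * p))) *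
      Real.exp (-1) ^ n := by
  have hap : 0 < a * p := by nlinarith
  have h1 : υ ^ n / (Nat.factorial n : ℝ) ≤ Real.exp υ :=
    Real.pow_div_factorial_le_exp υ hυ.le n
  have h2 : (y + μ) * n - (a * p / 2) * (n : ℝ) ^ 2
      ≤ (|y + μ| + 1)^2 / (2 * (a * p)) + (-1) * n := by
    set A := |y + μ| + 1 with hA
    set B := a * p with hB
    have hApos : 0 < A := by positivity
    have hid : A^2 / (2*B) * (2*B) = A^2 := by field_simp
    have h3 : (y + μ) * (n:ℝ) ≤ (A - 1) * (n:ℝ) := by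
      have hA1 : y + μ ≤ A - 1 := by rw [hA]; simp [le_abs_self]
      exact mul_le_mul_of_nonneg_right hA1 (Nat.cast_nonneg n)
    nlinarith [sq_nonneg (B * (n:ℝ) - A), (Nat.cast_nonneg n : (0:ℝ) ≤ (n:ℝ)), hap, sq_nonneg ((n:ℝ))]
  calc W υ a p μ n y ≤ Real.exp υ * Real.exp ((y + μ) * n - (a * p / 2) * (n : ℝ) ^ 2) := by
        unfold W
        exact mul_le_mul_of_nonneg_right h1 (Real.exp_nonneg _)
    _ ≤ Real.exp υ * (Real.exp ((|y + μ| + 1)^2 / (2 * (a * p))) * Real.exp (-1) ^ n) := by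
        apply mul_le_mul_of_nonneg_left _ (Real.exp_nonneg _)
        rw [← Real.exp_nat_mul, ← Real.exp_add]
        apply Real.exp_le_exp.2
        calc (y + μ) * n - (a * p / 2) * (n : ℝ) ^ 2
            ≤ (|y + μ| + 1)^2 / (2 * (a * p)) + (-1) * n := h2
          _ = (|y + μ| + 1)^2 / (2 * (a * p)) + (n:ℝ) * (-1) := by ring
    _ = _ := by ring

include hυ ha hp in
lemma summable_powW (k : ℕ) (y : ℝ) :
    Summable (fun n : ℕ => (n : ℝ) ^ k * W υ a p μ n y) := by
  have hr : ‖Real.exp (-1)‖ < 1 := by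
    rw [Real.norm_eq_abs, abs_of_pos (Real.exp_pos _)]
    exact Real.exp_lt_one_iff.2 (by norm_num)
  refine Summable.of_nonneg_of_le
    (fun n => mul_nonneg (by positivity) (W_pos hυ n y).le) (fun n => ?_)
    (((summable_pow_mul_geometric_of_norm_lt_one k hr).mul_left
      (Real.exp υ * Real.exp ((|y + μ| + 1)^2 / (2 * (a * p))))))
  have h := W_decay (μ := μ) hυ ha hp n y
  have hnk : (0:ℝ) ≤ (n:ℝ)^k := by positivity
  calc (n : ℝ) ^ k * W υ a p μ n y
      ≤ (n : ℝ) ^ k * (Real.exp υ * Real.exp ((|y + μ| + 1)^2 / (2 * (a * p))) *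
          Real.exp (-1) ^ n) := mul_le_mul_of_nonneg_left h hnk
    _ = Real.exp υ * Real.exp ((|y + μ| + 1)^2 / (2 * (a * p))) *
          ((n : ℝ) ^ k * Real.exp (-1) ^ n) := by ring

include hυ ha hp in
lemma M0_pos (y : ℝ) : 0 < M υ a p μ 0 y := by
  refine Summable.tsum_pos (summable_powW hυ ha hp 0 y)
    (fun n => mul_nonneg (by positivity) (W_pos hυ n y).le) 0 ?_
  simpa using (W_pos (a := a) (p := p) (μ := μ) hυ 0 y)

lemma hasDerivAt_W (n : ℕ) (y : ℝ) :
    HasDerivAt (fun y => W υ a p μ n y) ((n : ℝ) * W υ a p μ n y) y := by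
  have h1 : HasDerivAt (fun y : ℝ => (y + μ) * n - (a * p / 2) * (n : ℝ) ^ 2) (n : ℝ) y := by
    simpa using (((hasDerivAt_id y).add_const μ).mul_const ((n:ℝ))).sub_const
      ((a * p / 2) * (n : ℝ) ^ 2)
  have h2 := (h1.exp).const_mul (υ ^ n / (Nat.factorial n : ℝ))
  refine HasDerivAt.congr_deriv h2 ?_
  unfold W
  ring

include hυ ha hp in
lemma hasDerivAt_M (k : ℕ) (y₀ : ℝ) :
    HasDerivAt (M υ a p μ k) (M υ a p μ (k+1) y₀) y₀ := by
  have hap : 0 < a * p := by nlinarith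
  have hr : ‖Real.exp (-1)‖ < 1 := by
    rw [Real.norm_eq_abs, abs_of_pos (Real.exp_pos _)]
    exact Real.exp_lt_one_iff.2 (by norm_num)
  set C₀ : ℝ := Real.exp υ * Real.exp ((|y₀ + μ| + 2)^2 / (2 * (a * p))) with hC₀
  have hWb : ∀ (j : ℕ) (n : ℕ), ∀ y ∈ Metric.ball y₀ 1,
      (n : ℝ) ^ j * W υ a p μ n y ≤ C₀ * ((n : ℝ) ^ j * Real.exp (-1) ^ n) := by
    intro j n y hy
    have hyμ : |y + μ| + 1 ≤ |y₀ + μ| + 2 := by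
      have h := abs_sub_abs_le_abs_sub (y + μ) (y₀ + μ)
      have h2 : y + μ - (y₀ + μ) = y - y₀ := by ring
      have h3 : |y - y₀| < 1 := by rw [← Real.dist_eq]; exact Metric.mem_ball.1 hy
      rw [h2] at h
      linarith
    have hsq : (|y + μ| + 1)^2 ≤ (|y₀ + μ| + 2)^2 := by
      nlinarith [abs_nonneg (y + μ), abs_nonneg (y₀ + μ)]
    have hexp : Real.exp ((|y + μ| + 1)^2 / (2 * (a * p)))
        ≤ Real.exp ((|y₀ + μ| + 2)^2 / (2 * (a * p))) :=
      Real.exp_le_exp.2 ((div_le_div_iff_of_pos_right (by positivity)).2 hsq)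
    calc (n:ℝ)^j * W υ a p μ n y
        ≤ (n:ℝ)^j * (Real.exp υ * Real.exp ((|y + μ| + 1)^2 / (2 * (a * p))) *
            Real.exp (-1) ^ n) :=
          mul_le_mul_of_nonneg_left (W_decay (μ := μ) hυ ha hp n y) (by positivity)
      _ = (Real.exp υ * Real.exp ((|y + μ| + 1)^2 / (2 * (a * p)))) *
            ((n:ℝ)^j * Real.exp (-1) ^ n) := by ring
      _ ≤ C₀ * ((n : ℝ) ^ j * Real.exp (-1) ^ n) := by
          apply mul_le_mul_of_nonneg_right _ (by positivity)
          rw [hC₀]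
          exact mul_le_mul_of_nonneg_left hexp (Real.exp_nonneg _)
  have hsummu : Summable (fun n : ℕ => C₀ * ((n : ℝ) ^ (k+1) * Real.exp (-1) ^ n)) :=
    (summable_pow_mul_geometric_of_norm_lt_one (k+1) hr).mul_left C₀
  have hM : M υ a p μ k = fun y => ∑' n : ℕ, (n : ℝ) ^ k * W υ a p μ n y := rfl
  have hM' : M υ a p μ (k+1) y₀ = ∑' n : ℕ, (n : ℝ) ^ (k+1) * W υ a p μ n y₀ := rfl
  rw [hM, hM']
  refine hasDerivAt_of_tendstoUniformlyOn (l := (atTop : Filter ℕ)) Metric.isOpen_ball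
    (g := fun y => ∑' n : ℕ, (n:ℝ)^k * W υ a p μ n y)
    (g' := fun y => ∑' n : ℕ, (n:ℝ)^(k+1) * W υ a p μ n y)
    (f := fun (N : ℕ) (y : ℝ) => ∑ n ∈ Finset.range N, (n:ℝ)^k * W υ a p μ n y)
    (f' := fun (N : ℕ) (y : ℝ) => ∑ n ∈ Finset.range N, (n:ℝ)^(k+1) * W υ a p μ n y)
    ?_ ?_ ?_ (Metric.mem_ball_self one_pos)
  · apply tendstoUniformlyOn_tsum_nat hsummu
    intro n x hx
    rw [Real.norm_eq_abs, abs_of_nonneg (mul_nonneg (by positivity) (W_pos hυ n x).le)]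
    exact hWb (k+1) n x hx
  · apply Filter.Eventually.of_forall
    intro N x _
    apply HasDerivAt.fun_sum
    intro i _
    have h := (hasDerivAt_W (υ:=υ) (a:=a) (p:=p) (μ:=μ) i x).const_mul ((i:ℝ)^k)
    exact h.congr_deriv (by ring)
  · intro x _
    exact (summable_powW hυ ha hp k x).hasSum.tendsto_sum_nat

end Wlemmas

noncomputable def F1 (υ a p μ : ℝ) (y : ℝ) : ℝ :=
  -y/p + M υ a p μ 1 y / M υ a p μ 0 y

section Elemmas

variable {υ a p μ : ℝ} (hυ : 0 < υ) (ha : 1 < a) (hp : 0 < p)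

lemma K_eq_M0 (y : ℝ) : K υ a y p μ = M υ a p μ 0 y := by
  unfold K M W
  exact tsum_congr fun n => by rw [pow_zero, one_mul]

include hυ ha hp in
lemma hasDerivAt_E (y : ℝ) :
    HasDerivAt (fun z => E υ a z p μ) (F1 υ a p μ y) y := by
  have hKfun : (fun z => K υ a z p μ) = M υ a p μ 0 := funext (fun z => K_eq_M0 z)
  have hq : HasDerivAt (fun z : ℝ => -(z^2) / (2*p)) (-y/p) y := by
    have h := ((hasDerivAt_pow 2 y).neg).div_const (2*p)
    refine h.congr_deriv ?_
    simp only [Nat.cast_ofNat, show (2:ℕ) - 1 = 1 from rfl, pow_one]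
    rw [div_eq_div_iff (by positivity) hp.ne']
    ring
  have hK : HasDerivAt (fun z => K υ a z p μ) (M υ a p μ 1 y) y := by
    rw [hKfun]; exact hasDerivAt_M hυ ha hp 0 y
  have hlog : HasDerivAt (fun z => Real.log (K υ a z p μ))
      (M υ a p μ 1 y / M υ a p μ 0 y) y := by
    have h := hK.log (ne_of_gt (by rw [K_eq_M0]; exact M0_pos hυ ha hp y))
    rwa [K_eq_M0] at h
  exact hq.add hlog

include hυ ha hp in
lemma deriv_E_eq : deriv (fun z => E υ a z p μ) = F1 υ a p μ :=
  funext fun y => (hasDerivAt_E hυ ha hp y).deriv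

include hυ ha hp in
lemma hasDerivAt_F1 (y : ℝ) :
    HasDerivAt (F1 υ a p μ)
      (-1/p + (M υ a p μ 2 y * M υ a p μ 0 y - (M υ a p μ 1 y)^2) / (M υ a p μ 0 y)^2) y := by
  have h1 : HasDerivAt (fun z : ℝ => -z/p) (-1/p) y := by
    have h := (hasDerivAt_id y).neg.div_const p
    exact h
  have h2 := (hasDerivAt_M (μ := μ) hυ ha hp 1 y).div (hasDerivAt_M (μ := μ) hυ ha hp 0 y)
    (ne_of_gt (M0_pos (μ := μ) hυ ha hp y))
  have h := h1.add h2
  refine HasDerivAt.congr_deriv h ?_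
  have : (1:ℕ) + 1 = 2 := rfl
  rw [← this]
  ring

include hυ in
lemma W_ratio (hap : 0 < a * p) (n : ℕ) (y : ℝ) :
    W υ a p μ (n+2) y * W υ a p μ n y * Real.exp (a*p)
      ≤ W υ a p μ (n+1) y * W υ a p μ (n+1) y := by
  have hexp : Real.exp ((y + μ) * ((n+2:ℕ):ℝ) - (a * p / 2) * ((n+2:ℕ) : ℝ)^2) *
      Real.exp ((y + μ) * (n:ℝ) - (a * p / 2) * (n : ℝ)^2) * Real.exp (a*p)
      = Real.exp ((y + μ) * ((n+1:ℕ):ℝ) - (a * p / 2) * ((n+1:ℕ) : ℝ)^2) *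
        Real.exp ((y + μ) * ((n+1:ℕ):ℝ) - (a * p / 2) * ((n+1:ℕ) : ℝ)^2) := by
    rw [← Real.exp_add, ← Real.exp_add, ← Real.exp_add]
    congr 1
    push_cast
    ring
  have hnat : (Nat.factorial (n+1)) * (Nat.factorial (n+1))
      ≤ (Nat.factorial (n+2)) * (Nat.factorial n) := by
    rw [Nat.factorial_succ (n+1), Nat.factorial_succ n]
    nlinarith [Nat.factorial_pos n]
  have hcoef : υ^(n+2) / ((Nat.factorial (n+2)) : ℝ) * (υ^n / ((Nat.factorial n) : ℝ))
      ≤ υ^(n+1) / ((Nat.factorial (n+1)) : ℝ) * (υ^(n+1) / ((Nat.factorial (n+1)) : ℝ)) := by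
    rw [div_mul_div_comm, div_mul_div_comm, ← pow_add, ← pow_add]
    have he : n + 2 + n = n + 1 + (n + 1) := by omega
    rw [he]
    have d1 : (0:ℝ) < ((Nat.factorial (n+2)) : ℝ) * ((Nat.factorial n) : ℝ) := by
      have := Nat.factorial_pos (n+2); have := Nat.factorial_pos n
      exact mul_pos (by exact_mod_cast ‹0 < Nat.factorial (n+2)›)
        (by exact_mod_cast ‹0 < Nat.factorial n›)
    have d2 : (0:ℝ) < ((Nat.factorial (n+1)) : ℝ) * ((Nat.factorial (n+1)) : ℝ) := by
      have := Nat.factorial_pos (n+1)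
      exact mul_pos (by exact_mod_cast ‹0 < Nat.factorial (n+1)›)
        (by exact_mod_cast ‹0 < Nat.factorial (n+1)›)
    apply (div_le_div_iff_of_pos_left (pow_pos hυ _) d1 d2).2
    exact_mod_cast hnat
  have h1 := mul_le_mul_of_nonneg_right hcoef
    (mul_nonneg (Real.exp_nonneg ((y + μ) * ((n+1:ℕ):ℝ) - (a * p / 2) * ((n+1:ℕ) : ℝ)^2))
      (Real.exp_nonneg ((y + μ) * ((n+1:ℕ):ℝ) - (a * p / 2) * ((n+1:ℕ) : ℝ)^2)))
  calc W υ a p μ (n+2) y * W υ a p μ n y * Real.exp (a*p)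
      = (υ^(n+2) / ((Nat.factorial (n+2)) : ℝ) * (υ^n / ((Nat.factorial n) : ℝ))) *
        (Real.exp ((y + μ) * ((n+2:ℕ):ℝ) - (a * p / 2) * ((n+2:ℕ) : ℝ)^2) *
          Real.exp ((y + μ) * (n:ℝ) - (a * p / 2) * (n : ℝ)^2) * Real.exp (a*p)) := by
        unfold W; push_cast; ring
    _ = (υ^(n+2) / ((Nat.factorial (n+2)) : ℝ) * (υ^n / ((Nat.factorial n) : ℝ))) *
        (Real.exp ((y + μ) * ((n+1:ℕ):ℝ) - (a * p / 2) * ((n+1:ℕ) : ℝ)^2) *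
          Real.exp ((y + μ) * ((n+1:ℕ):ℝ) - (a * p / 2) * ((n+1:ℕ) : ℝ)^2)) := by
        rw [hexp]
    _ ≤ (υ^(n+1) / ((Nat.factorial (n+1)) : ℝ) * (υ^(n+1) / ((Nat.factorial (n+1)) : ℝ))) *
        (Real.exp ((y + μ) * ((n+1:ℕ):ℝ) - (a * p / 2) * ((n+1:ℕ) : ℝ)^2) *
          Real.exp ((y + μ) * ((n+1:ℕ):ℝ) - (a * p / 2) * ((n+1:ℕ) : ℝ)^2)) := h1
    _ = W υ a p μ (n+1) y * W υ a p μ (n+1) y := by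
        unfold W; push_cast; ring

include hυ ha hp in
lemma W_mode (y : ℝ) : ∃ n : ℕ, W υ a p μ (n+1) y ≤ W υ a p μ n y := by
  have hap : 0 < a * p := by nlinarith
  obtain ⟨n, hn⟩ := exists_nat_ge (υ * Real.exp (y + μ))
  refine ⟨n, ?_⟩
  have hrel : W υ a p μ (n+1) y = W υ a p μ n y *
      ((υ / ((n:ℝ)+1)) * Real.exp ((y+μ) - (a*p/2) * (2*(n:ℝ)+1))) := by
    unfold W
    have h1 : Real.exp ((y+μ)*((n+1:ℕ):ℝ) - (a*p/2)*((n+1:ℕ):ℝ)^2)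
        = Real.exp ((y+μ)*(n:ℝ) - (a*p/2)*(n:ℝ)^2) *
          Real.exp ((y+μ) - (a*p/2)*(2*(n:ℝ)+1)) := by
      rw [← Real.exp_add]; congr 1; push_cast; ring
    rw [h1, Nat.factorial_succ]
    have hfac : ((Nat.factorial n : ℝ)) ≠ 0 := by
      exact_mod_cast (Nat.factorial_pos n).ne'
    have hn1 : ((n:ℝ)+1) ≠ 0 := by positivity
    push_cast
    field_simp
    ring
  have hq1 : Real.exp ((y+μ) - (a*p/2) * (2*(n:ℝ)+1)) ≤ Real.exp (y+μ) := by
    apply Real.exp_le_exp.2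
    have : 0 ≤ (a*p/2) * (2*(n:ℝ)+1) := by positivity
    linarith
  have hq2 : (υ / ((n:ℝ)+1)) * Real.exp ((y+μ) - (a*p/2) * (2*(n:ℝ)+1)) ≤ 1 := by
    have h2 : (υ / ((n:ℝ)+1)) * Real.exp ((y+μ) - (a*p/2) * (2*(n:ℝ)+1))
        ≤ (υ / ((n:ℝ)+1)) * Real.exp (y+μ) := by
      apply mul_le_mul_of_nonneg_left hq1 (by positivity)
    have h3 : (υ / ((n:ℝ)+1)) * Real.exp (y+μ) ≤ 1 := by
      rw [div_mul_eq_mul_div, div_le_one (by positivity)]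
      calc υ * Real.exp (y+μ) ≤ (n:ℝ) := hn
        _ ≤ (n:ℝ) + 1 := by linarith
    linarith
  rw [hrel]
  have hWpos := W_pos (a := a) (p := p) (μ := μ) hυ n y
  nlinarith [mul_nonneg (le_of_lt (div_pos hυ (by positivity : (0:ℝ) < (n:ℝ)+1)))
    (Real.exp_nonneg ((y+μ) - (a*p/2) * (2*(n:ℝ)+1)))]

include hυ ha hp in
lemma M_var_le (ε : ℝ) (hε : 0 < ε) (hε3 : 3*ε < 1) (y : ℝ) :
    M υ a p μ 2 y * M υ a p μ 0 y - (M υ a p μ 1 y)^2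
      ≤ ((1/(a*p) + 1 + 3/(4*ε))/(1-3*ε)) * (M υ a p μ 0 y * M υ a p μ 0 y) := by
  have hap : 0 < a * p := by nlinarith
  have hs0 : Summable (fun n : ℕ => W υ a p μ n y) :=
    (summable_powW hυ ha hp 0 y).congr (fun n => by rw [pow_zero, one_mul])
  have hs2 : Summable (fun n : ℕ => (n:ℝ)^2 * W υ a p μ n y) := summable_powW hυ ha hp 2 y
  have hs1 : Summable (fun n : ℕ => (n:ℝ)^1 * W υ a p μ n y) := summable_powW hυ ha hp 1 y
  obtain ⟨c, hc⟩ := var_bound (a*p) ε hap hε hε3 (fun n => W υ a p μ n y)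
    (fun n => W_pos hυ n y) hs0 hs2 (fun n => W_ratio hυ hap n y) (W_mode hυ ha hp y)
  have hQeq : ∑' n : ℕ, ((n:ℝ) - c)^2 * W υ a p μ n y
      = M υ a p μ 2 y - 2*c*(M υ a p μ 1 y) + c^2 * (M υ a p μ 0 y) := by
    have e : (fun n : ℕ => ((n:ℝ) - c)^2 * W υ a p μ n y)
        = fun n : ℕ => ((n:ℝ)^2 * W υ a p μ n y) - (2*c) * ((n:ℝ)^1 * W υ a p μ n y)
          + c^2 * ((n:ℝ)^0 * W υ a p μ n y) := by
      funext n; ring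
    rw [e, Summable.tsum_add (Summable.sub hs2 ((hs1.mul_left (2*c))))
        (((summable_powW hυ ha hp 0 y)).mul_left (c^2)),
      Summable.tsum_sub hs2 (hs1.mul_left (2*c)), tsum_mul_left, tsum_mul_left]
    unfold M
    ring
  have hK0eq : ∑' n : ℕ, W υ a p μ n y = M υ a p μ 0 y := by
    unfold M
    exact tsum_congr fun n => by rw [pow_zero, one_mul]
  rw [hQeq, hK0eq] at hc
  have hM0 := M0_pos (μ := μ) hυ ha hp y
  nlinarith [sq_nonneg (M υ a p μ 1 y - c * M υ a p μ 0 y), hc, hM0,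
    mul_le_mul_of_nonneg_right hc hM0.le]

include hυ ha hp in
lemma deriv2_neg (hsmall : (a*p) * (1 + 6*a/(a-1)) ≤ 5*(a-1)/16) (y : ℝ) :
    -1/p + (M υ a p μ 2 y * M υ a p μ 0 y - (M υ a p μ 1 y)^2) / (M υ a p μ 0 y)^2 < 0 := by
  have ha1 : 0 < a - 1 := by linarith
  have hap : 0 < a * p := by nlinarith
  set ε : ℝ := (a-1)/(8*a) with hεdef
  have hεpos : 0 < ε := by rw [hεdef]; positivity
  have hε3 : 3*ε < 1 := by
    rw [hεdef, show (3:ℝ) * ((a-1)/(8*a)) = (3*(a-1))/(8*a) by ring,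
      div_lt_iff₀ (by positivity)]
    nlinarith
  have hvar := M_var_le (μ := μ) hυ ha hp ε hεpos hε3 y
  have hM0 := M0_pos (μ := μ) hυ ha hp y
  set B : ℝ := (1/(a*p) + 1 + 3/(4*ε))/(1-3*ε) with hBdef
  have hfrac : (M υ a p μ 2 y * M υ a p μ 0 y - (M υ a p μ 1 y)^2) / (M υ a p μ 0 y)^2
      ≤ B := by
    rw [div_le_iff₀ (by positivity)]
    calc M υ a p μ 2 y * M υ a p μ 0 y - (M υ a p μ 1 y)^2
        ≤ B * (M υ a p μ 0 y * M υ a p μ 0 y) := hvar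
      _ = B * (M υ a p μ 0 y)^2 := by ring
  have hεval : 3/(4*ε) = 6*a/(a-1) := by
    rw [hεdef]
    field_simp
    ring
  have h3ε : 1 - 3*ε = (5*a+3)/(8*a) := by
    rw [hεdef]
    field_simp
    ring
  have hBlt : B < 1/p := by
    have hG : (0:ℝ) < (5*a+3)/(8*a) := by positivity
    have key : (1/(a*p) + 1 + 6*a/(a-1)) * (8*a*p) < 5*a+3 := by
      have e1 : (1/(a*p)) * (8*a*p) = 8 := by field_simp
      have e2 : (1 + 6*a/(a-1)) * (a*p) ≤ 5*(a-1)/16 := by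
        calc (1 + 6*a/(a-1)) * (a*p) = a*p*(1 + 6*a/(a-1)) := by ring
          _ ≤ 5*(a-1)/16 := hsmall
      nlinarith [e1, e2, ha1]
    have key2 : 1/(a*p) + 1 + 6*a/(a-1) < (1/p) * ((5*a+3)/(8*a)) := by
      rw [show (1:ℝ)/p * ((5*a+3)/(8*a)) = (5*a+3)/(8*a*p) by rw [div_mul_div_comm, one_mul]; ring]
      rw [lt_div_iff₀ (by positivity)]
      exact key
    rw [hBdef, hεval, h3ε, div_lt_iff₀ hG]
    exact key2
  have hnd : (-1:ℝ)/p = -(1/p) := by ring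
  rw [hnd]
  linarith

include hυ ha hp in
lemma E_upper (y : ℝ) : E υ a y p μ ≤ -(y^2)/(2*p) + υ + (y+μ)^2/(2*(a*p)) := by
  have hap : 0 < a * p := by nlinarith
  unfold E
  have hterm : ∀ n : ℕ, (υ ^ n / (Nat.factorial n : ℝ)) *
      Real.exp ((y + μ) * n - (a * p / 2) * (n : ℝ) ^ 2)
      ≤ υ^n/((Nat.factorial n) : ℝ) * Real.exp ((y+μ)^2/(2*(a*p))) := by
    intro n
    have hfac : (0:ℝ) < (Nat.factorial n : ℝ) := by exact_mod_cast Nat.factorial_pos n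
    apply mul_le_mul_of_nonneg_left _ (by positivity)
    apply Real.exp_le_exp.2
    have hid : (y+μ)^2/(2*(a*p))*(2*(a*p)) = (y+μ)^2 := by field_simp
    nlinarith [sq_nonneg ((y+μ) - (a*p)*(n:ℝ)), hap, sq_nonneg ((n:ℝ)),
      (Nat.cast_nonneg n : (0:ℝ) ≤ (n:ℝ))]
  have hsumW : Summable (fun n : ℕ => (υ ^ n / (Nat.factorial n : ℝ)) *
      Real.exp ((y + μ) * n - (a * p / 2) * (n : ℝ) ^ 2)) :=
    (summable_powW hυ ha hp 0 y).congr (fun n => by rw [pow_zero, one_mul]; rfl)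
  have hsumc : Summable (fun n : ℕ => υ^n/((Nat.factorial n) : ℝ) *
      Real.exp ((y+μ)^2/(2*(a*p)))) :=
    (Real.summable_pow_div_factorial υ).mul_right _
  have h1 : K υ a y p μ ≤ ∑' n : ℕ, υ^n/((Nat.factorial n) : ℝ) *
      Real.exp ((y+μ)^2/(2*(a*p))) := by
    unfold K
    exact Summable.tsum_le_tsum hterm hsumW hsumc
  have h2 : ∑' n : ℕ, υ^n/((Nat.factorial n) : ℝ) * Real.exp ((y+μ)^2/(2*(a*p)))
      = Real.exp (υ + (y+μ)^2/(2*(a*p))) := by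
    rw [tsum_mul_right, Real.exp_add]
    congr 1
    rw [Real.exp_eq_exp_ℝ, NormedSpace.exp_eq_tsum_div]
  rw [h2] at h1
  have hKpos : 0 < K υ a y p μ := by rw [K_eq_M0]; exact M0_pos hυ ha hp y
  have h3 := (Real.log_le_log_iff hKpos (Real.exp_pos _)).2 h1
  rw [Real.log_exp] at h3
  linarith

end Elemmas

theorem stmt_0 (υ a : ℝ) (hυ : 0 < υ) (ha : 1 < a) :
    ∃ p₀ > (0 : ℝ), ∀ p : ℝ, 0 < p → p ≤ p₀ → ∀ μ : ℝ, ∃ ybar : ℝ,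
      (∀ y : ℝ, E υ a y p μ ≤ E υ a ybar p μ) ∧
      (∀ y' : ℝ, (∀ y : ℝ, E υ a y p μ ≤ E υ a y' p μ) → y' = ybar) ∧
      deriv (deriv (fun y => E υ a y p μ)) ybar < 0 := by
  have ha1 : 0 < a - 1 := by linarith
  set C1 : ℝ := 1 + 6*a/(a-1) with hC1
  have hC1pos : 0 < C1 := by rw [hC1]; positivity
  refine ⟨5*(a-1)/(16*a*C1), by positivity, ?_⟩
  intro p hp hple μ
  have hsmall : (a*p) * C1 ≤ 5*(a-1)/16 := by
    calc a*p*C1 = (a*C1)*p := by ring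
      _ ≤ (a*C1)*(5*(a-1)/(16*a*C1)) := mul_le_mul_of_nonneg_left hple (by positivity)
      _ = 5*(a-1)/16 := by field_simp
  have hap : 0 < a*p := by nlinarith
  have hE2 : ∀ y, deriv (deriv (fun z => E υ a z p μ)) y < 0 := by
    intro y
    rw [deriv_E_eq (μ := μ) hυ ha hp, (hasDerivAt_F1 (μ := μ) hυ ha hp y).deriv]
    exact deriv2_neg (μ := μ) hυ ha hp hsmall y
  have hanti : StrictAnti (F1 υ a p μ) :=
    strictAnti_of_hasDerivAt_neg
      (f' := fun y => -1/p +
        (M υ a p μ 2 y * M υ a p μ 0 y - (M υ a p μ 1 y)^2) / (M υ a p μ 0 y)^2)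
      (fun y => hasDerivAt_F1 (μ := μ) hυ ha hp y)
      (fun y => deriv2_neg (μ := μ) hυ ha hp hsmall y)
  have hcont : Continuous (fun z => E υ a z p μ) :=
    continuous_iff_continuousAt.2 (fun y => (hasDerivAt_E (μ := μ) hυ ha hp y).continuousAt)
  set κ : ℝ := (a-1)/(4*(a*p)) with hκ
  have hκpos : 0 < κ := by rw [hκ]; positivity
  set D : ℝ := υ + ((1+2/(a-1))*μ^2)/(2*(a*p)) with hD
  have hEub : ∀ y, E υ a y p μ ≤ -κ * y^2 + D := by
    intro y
    have h1 := E_upper (μ := μ) hυ ha hp y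
    have h2 : (y+μ)^2 ≤ (1+(a-1)/2)*y^2 + (1+2/(a-1))*μ^2 := by
      have hid : (2/(a-1))*((a-1)/2) = 1 := by field_simp
      nlinarith [sq_nonneg (((a-1)/2)*y - μ), ha1, hid, sq_nonneg μ, sq_nonneg y]
    have h3 : (y+μ)^2/(2*(a*p))
        ≤ ((1+(a-1)/2)*y^2 + (1+2/(a-1))*μ^2)/(2*(a*p)) :=
      (div_le_div_iff_of_pos_right (by positivity)).2 h2
    have h4 : -(y^2)/(2*p) + ((1+(a-1)/2)*y^2 + (1+2/(a-1))*μ^2)/(2*(a*p))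
        = -κ*y^2 + ((1+2/(a-1))*μ^2)/(2*(a*p)) := by
      rw [hκ]
      field_simp
      ring
    rw [hD]
    linarith
  set R : ℝ := (|D - E υ a 0 p μ| + 1)/κ + 1 with hR
  have hR1 : 1 ≤ R := by
    rw [hR]
    have : 0 ≤ (|D - E υ a 0 p μ| + 1)/κ := by positivity
    linarith
  have hout : ∀ y, R < |y| → E υ a y p μ < E υ a 0 p μ := by
    intro y hy
    have h1 := hEub y
    have hy2 : R ≤ y^2 := by
      nlinarith [abs_nonneg y, sq_abs y]
    have h2 : κ*R ≤ κ*y^2 := mul_le_mul_of_nonneg_left hy2 hκpos.le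
    have h3 : κ*R = |D - E υ a 0 p μ| + 1 + κ := by
      rw [hR]
      field_simp
    nlinarith [le_abs_self (D - E υ a 0 p μ), hκpos]
  obtain ⟨ybar, hybar_mem, hybar_max⟩ := (isCompact_Icc (a := -R) (b := R)).exists_isMaxOn
    (Set.nonempty_Icc.2 (by linarith)) hcont.continuousOn
  have hmax' : ∀ z ∈ Set.Icc (-R) R, E υ a z p μ ≤ E υ a ybar p μ :=
    fun z hz => hybar_max hz
  have h0mem : (0:ℝ) ∈ Set.Icc (-R) R := Set.mem_Icc.2 ⟨by linarith, by linarith⟩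
  have hglobal : ∀ y, E υ a y p μ ≤ E υ a ybar p μ := by
    intro y
    by_cases hyR : |y| ≤ R
    · exact hmax' y (Set.mem_Icc.2 ⟨(abs_le.1 hyR).1, (abs_le.1 hyR).2⟩)
    · have h1 := hout y (lt_of_not_ge hyR)
      have h0 := hmax' 0 h0mem
      linarith
  refine ⟨ybar, hglobal, ?_, hE2 ybar⟩
  intro y' hy'
  have hly' : IsLocalMax (fun z => E υ a z p μ) y' :=
    Filter.Eventually.of_forall (fun z => hy' z)
  have hlybar : IsLocalMax (fun z => E υ a z p μ) ybar :=
    Filter.Eventually.of_forall (fun z => hglobal z)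
  have hc1 : deriv (fun z => E υ a z p μ) y' = 0 := hly'.deriv_eq_zero
  have hc2 : deriv (fun z => E υ a z p μ) ybar = 0 := hlybar.deriv_eq_zero
  rw [deriv_E_eq (μ := μ) hυ ha hp] at hc1 hc2
  exact hanti.injective (hc1.trans hc2.symm)
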